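/- Let v : [a,b] → ℝⁿ be continuously differentiable and suppose v(t) = 0 for only finitely many t ∈ [a,b]. Then there exists a continuously differentiable μ : [a,b] → ℝ such that |μ(t)| = ‖v(t)‖₂ for all t ∈ [a,b]. -/

import Mathlib

open Set

theorem signed_norm_C1
    (n : ℕ) (a b : ℝ) (v : ℝ → EuclideanSpace ℝ (Fin n))
    (hv : ContDiffOn ℝ 1 v (Icc a b))
    (hfin : {t ∈ Icc a b | v t = 0}.Finite) :
    ∃ μ : ℝ → ℝ, ContDiffOn ℝ 1 μ (Icc a b) ∧
      ∀ t ∈ Icc a b, |μ t| = ‖v t‖ := by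
  classical
  rcases lt_or_ge b a with hba | hab
  · refine ⟨0, contDiffOn_const, fun t ht => absurd ht (by simp [Set.Icc_eq_empty_of_lt hba])⟩
  rcases eq_or_lt_of_le hab with rfl | hab
  · refine ⟨fun _ => ‖v a‖, contDiffOn_const, fun t ht => ?_⟩
    rcases Set.mem_Icc.mp ht with ⟨h1, h2⟩
    have : t = a := le_antisymm h2 h1
    subst this
    exact abs_of_nonneg (norm_nonneg _)
  set I := Icc a b with hIdef
  have hUD : UniqueDiffOn ℝ I := uniqueDiffOn_Icc hab
  set F : Finset ℝ := hfin.toFinset with hFdef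
  have hmemF : ∀ z : ℝ, z ∈ F ↔ z ∈ I ∧ v z = 0 := by
    intro z
    rw [hFdef, Set.Finite.mem_toFinset]
    exact Set.mem_sep_iff
  set c : ℝ → ℕ := fun t => (F.filter (fun z => z < t)).card with hcdef
  set cl : ℝ → ℕ := fun t => (F.filter (fun z => z ≤ t)).card with hcldef
  set sg : ℝ → ℝ := fun t => (-1 : ℝ) ^ (c t) with hsgdef
  set μ : ℝ → ℝ := fun t => sg t * ‖v t‖ with hμdef
  set w : ℝ → EuclideanSpace ℝ (Fin n) := fun t => derivWithin v I t with hwdef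
  set D : ℝ → ℝ := fun t => if v t = 0 then (-1:ℝ) ^ (cl t) * ‖w t‖
      else sg t * (inner ℝ (v t) (w t) : ℝ) / ‖v t‖ with hDdef
  have hvd : DifferentiableOn ℝ v I := hv.differentiableOn one_ne_zero
  have hv_cont : ContinuousOn v I := hv.continuousOn
  have hw_cont : ContinuousOn w I := hv.continuousOn_derivWithin hUD le_rfl
  have hderiv : ∀ t ∈ I, HasDerivWithinAt v (w t) I t :=
    fun t ht => (hvd t ht).hasDerivWithinAt
  -- isolation of points of F
  have isol : ∀ t₀ : ℝ, ∃ δ > 0, ∀ z ∈ F, z ≠ t₀ → δ ≤ |z - t₀| := by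
    intro t₀
    rcases (F.erase t₀).eq_empty_or_nonempty with he | hne
    · exact ⟨1, one_pos, fun z hz hzt =>
        absurd (Finset.mem_erase.mpr ⟨hzt, hz⟩) (by simp [he])⟩
    · obtain ⟨z₀, hz₀, hmin⟩ := Finset.exists_min_image _ (fun z => |z - t₀|) hne
      have hz₀ne : z₀ ≠ t₀ := (Finset.mem_erase.mp hz₀).1
      exact ⟨|z₀ - t₀|, abs_pos.mpr (sub_ne_zero.mpr hz₀ne),
        fun z hz hzt => hmin z (Finset.mem_erase.mpr ⟨hzt, hz⟩)⟩
  -- sign counting lemmas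
  have Sa : ∀ t₀ : ℝ, ∀ δ > 0, (∀ z ∈ F, z ≠ t₀ → δ ≤ |z - t₀|) →
      ∀ t, t₀ < t → t < t₀ + δ → c t = cl t₀ := by
    intro t₀ δ hδ hiso t h1 h2
    simp only [hcdef, hcldef]
    congr 1
    apply Finset.filter_congr
    intro z hz
    constructor
    · intro hzt
      by_contra hle
      push_neg at hle
      have hne : z ≠ t₀ := ne_of_gt hle
      have := hiso z hz hne
      rw [abs_of_pos (by linarith)] at this
      linarith
    · intro h; linarith
  have Sb : ∀ t₀ : ℝ, ∀ δ > 0, (∀ z ∈ F, z ≠ t₀ → δ ≤ |z - t₀|) →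
      ∀ t, t₀ - δ < t → t < t₀ → c t = c t₀ := by
    intro t₀ δ hδ hiso t h1 h2
    simp only [hcdef]
    congr 1
    apply Finset.filter_congr
    intro z hz
    constructor
    · intro h; linarith
    · intro hzt
      by_contra hle
      push_neg at hle
      have hne : z ≠ t₀ := ne_of_lt hzt
      have := hiso z hz hne
      rw [abs_of_neg (by linarith)] at this
      linarith
  have Sc : ∀ t₀ ∈ F, cl t₀ = c t₀ + 1 := by
    intro t₀ h
    simp only [hcdef, hcldef]
    have : F.filter (fun z => z ≤ t₀) = insert t₀ (F.filter (fun z => z < t₀)) := by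
      ext z
      simp only [Finset.mem_filter, Finset.mem_insert]
      constructor
      · rintro ⟨hz, hle⟩
        rcases lt_or_eq_of_le hle with h' | h'
        · exact Or.inr ⟨hz, h'⟩
        · exact Or.inl h'
      · rintro (rfl | ⟨hz, hlt⟩)
        · exact ⟨h, le_refl _⟩
        · exact ⟨hz, le_of_lt hlt⟩
    rw [this, Finset.card_insert_of_notMem (by simp)]
  have Sc' : ∀ t₀ : ℝ, t₀ ∉ F → cl t₀ = c t₀ := by
    intro t₀ h
    simp only [hcdef, hcldef]
    congr 1
    apply Finset.filter_congr
    intro z hz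
    have : z ≠ t₀ := fun e => h (e ▸ hz)
    exact ⟨fun h' => lt_of_le_of_ne h' this, le_of_lt⟩
  -- the derivative candidate works
  have hasD : ∀ t₀ ∈ I, HasDerivWithinAt μ (D t₀) I t₀ := by
    intro t₀ ht₀
    obtain ⟨δ, hδ, hiso⟩ := isol t₀
    by_cases h0 : v t₀ = 0
    · -- zero point
      have ht₀F : t₀ ∈ F := (hmemF t₀).mpr ⟨ht₀, h0⟩
      rw [hasDerivWithinAt_iff_tendsto_slope]
      have hv' : Filter.Tendsto (slope v t₀) (nhdsWithin t₀ (I \ {t₀})) (nhds (w t₀)) :=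
        hasDerivWithinAt_iff_tendsto_slope.mp (hderiv t₀ ht₀)
      have hns : Filter.Tendsto (fun t => (-1:ℝ)^(cl t₀) * ‖slope v t₀ t‖)
          (nhdsWithin t₀ (I \ {t₀})) (nhds ((-1:ℝ)^(cl t₀) * ‖w t₀‖)) :=
        hv'.norm.const_mul _
      have hD : D t₀ = (-1:ℝ)^(cl t₀) * ‖w t₀‖ := by rw [hDdef]; simp [h0]
      rw [hD]
      refine Filter.Tendsto.congr' ?_ hns
      have hball : ∀ᶠ t in nhdsWithin t₀ (I \ {t₀}), |t - t₀| < δ := by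
        have hb : Metric.ball t₀ δ ∈ nhdsWithin t₀ (I \ {t₀}) :=
          mem_nhdsWithin_of_mem_nhds (Metric.ball_mem_nhds _ hδ)
        filter_upwards [hb] with t ht
        simpa [Real.dist_eq] using ht
      filter_upwards [hball, self_mem_nhdsWithin] with t htb ht
      obtain ⟨htI, htne⟩ := ht
      have htne' : t ≠ t₀ := by simpa using htne
      have hslμ : slope μ t₀ t = (t - t₀)⁻¹ * (sg t * ‖v t‖) := by
        rw [slope_def_field, hμdef]
        simp only [h0, norm_zero, mul_zero, sub_zero]
        ring
      have hslv : ‖slope v t₀ t‖ = |t - t₀|⁻¹ * ‖v t‖ := by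
        rw [slope]
        simp [h0, norm_smul, Real.norm_eq_abs]
      rw [hslμ, hslv]
      rcases lt_or_gt_of_ne htne' with h | h
      · -- t < t₀
        have hc : c t = c t₀ := Sb t₀ δ hδ hiso t (by rcases abs_lt.mp htb with ⟨h1, _⟩; linarith) h
        have hcl : cl t₀ = c t₀ + 1 := Sc t₀ ht₀F
        have habs : |t - t₀| = -(t - t₀) := abs_of_neg (by linarith)
        simp only [hsgdef]
        rw [hcl, hc, habs, pow_succ, inv_neg]
        ring
      · -- t > t₀
        have hc : c t = cl t₀ := Sa t₀ δ hδ hiso t h (by rcases abs_lt.mp htb with ⟨_, h2⟩; linarith)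
        have habs : |t - t₀| = t - t₀ := abs_of_pos (by linarith)
        simp only [hsgdef]
        rw [hc, habs]
        ring
    · -- nonzero point
      have ht₀F : t₀ ∉ F := fun h => h0 ((hmemF t₀).mp h).2
      have hq : HasDerivWithinAt (fun t => (inner ℝ (v t) (v t) : ℝ))
          ((inner ℝ (v t₀) (w t₀) : ℝ) + (inner ℝ (w t₀) (v t₀) : ℝ)) I t₀ :=
        (hderiv t₀ ht₀).inner ℝ (hderiv t₀ ht₀)
      have hq0 : (inner ℝ (v t₀) (v t₀) : ℝ) ≠ 0 := fun h => h0 (inner_self_eq_zero.mp h)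
      have hs := hq.sqrt hq0
      have hfun : (fun t => Real.sqrt ((inner ℝ (v t) (v t) : ℝ))) = fun t => ‖v t‖ := by
        funext t; rw [real_inner_self_eq_norm_sq, Real.sqrt_sq (norm_nonneg _)]
      rw [hfun] at hs
      have hval : ((inner ℝ (v t₀) (w t₀) : ℝ) + (inner ℝ (w t₀) (v t₀) : ℝ)) /
          (2 * Real.sqrt ((inner ℝ (v t₀) (v t₀) : ℝ)))
          = (inner ℝ (v t₀) (w t₀) : ℝ) / ‖v t₀‖ := by
        rw [real_inner_self_eq_norm_sq, Real.sqrt_sq (norm_nonneg _), real_inner_comm (w t₀)]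
        have : ‖v t₀‖ ≠ 0 := norm_ne_zero_iff.mpr h0
        field_simp
        ring
      rw [hval] at hs
      have hsm := hs.const_mul (sg t₀)
      have hev : μ =ᶠ[nhdsWithin t₀ I] (fun t => sg t₀ * ‖v t‖) := by
        have hball : Metric.ball t₀ δ ∈ nhdsWithin t₀ I :=
          mem_nhdsWithin_of_mem_nhds (Metric.ball_mem_nhds _ hδ)
        filter_upwards [hball] with t htb
        have hd : |t - t₀| < δ := by simpa [Real.dist_eq] using htb
        have hsgeq : sg t = sg t₀ := by
          rcases lt_trichotomy t t₀ with h | h | h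
          · have hc : c t = c t₀ :=
              Sb t₀ δ hδ hiso t (by rcases abs_lt.mp hd with ⟨h1, _⟩; linarith) h
            simp only [hsgdef]
            rw [hc]
          · rw [h]
          · have hc : c t = cl t₀ :=
              Sa t₀ δ hδ hiso t h (by rcases abs_lt.mp hd with ⟨_, h2⟩; linarith)
            simp only [hsgdef]
            rw [hc, Sc' t₀ ht₀F]
        rw [hμdef]
        simp only [hsgeq]
      have hres := hsm.congr_of_eventuallyEq hev rfl
      have hDt : D t₀ = sg t₀ * ((inner ℝ (v t₀) (w t₀) : ℝ) / ‖v t₀‖) := by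
        rw [hDdef]; simp [h0, mul_div_assoc]
      rw [hDt]
      exact hres
  have contD : ContinuousOn D I := by
    intro t₀ ht₀
    obtain ⟨δ, hδ, hiso⟩ := isol t₀
    by_cases h0 : v t₀ = 0
    · have ht₀F : t₀ ∈ F := (hmemF t₀).mpr ⟨ht₀, h0⟩
      by_cases hw0 : w t₀ = 0
      · -- squeeze
        have hDt : D t₀ = 0 := by simp only [hDdef]; simp [h0, hw0]
        have hbound : ∀ t, ‖D t‖ ≤ ‖w t‖ := by
          intro t
          simp only [hDdef]
          by_cases hvt : v t = 0
          · rw [if_pos hvt]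
            simp [abs_mul, abs_pow, Real.norm_eq_abs, abs_norm]
          · rw [if_neg hvt, Real.norm_eq_abs, abs_div, abs_mul]
            have h1 : |sg t| = 1 := by simp [hsgdef, abs_pow]
            rw [h1, one_mul, abs_norm]
            have h3 : (0:ℝ) < ‖v t‖ := norm_pos_iff.mpr hvt
            rw [div_le_iff₀ h3]
            calc |(inner ℝ (v t) (w t) : ℝ)| ≤ ‖v t‖ * ‖w t‖ := abs_real_inner_le_norm _ _
              _ = ‖w t‖ * ‖v t‖ := mul_comm _ _
        have hwt : Filter.Tendsto (fun t => ‖w t‖) (nhdsWithin t₀ I) (nhds ‖w t₀‖) :=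
          (hw_cont t₀ ht₀).norm
        rw [hw0, norm_zero] at hwt
        show Filter.Tendsto D (nhdsWithin t₀ I) (nhds (D t₀))
        rw [hDt]
        exact squeeze_zero_norm hbound hwt
      · -- w t₀ ≠ 0 : punctured limit
        have hσ : D t₀ = (-1:ℝ)^(cl t₀) * ‖w t₀‖ := by simp only [hDdef]; simp [h0]
        rw [← continuousWithinAt_diff_self]
        show Filter.Tendsto D (nhdsWithin t₀ (I \ {t₀})) (nhds (D t₀))
        have hv' : Filter.Tendsto (slope v t₀) (nhdsWithin t₀ (I \ {t₀})) (nhds (w t₀)) :=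
          hasDerivWithinAt_iff_tendsto_slope.mp (hderiv t₀ ht₀)
        have hwL : Filter.Tendsto w (nhdsWithin t₀ (I \ {t₀})) (nhds (w t₀)) :=
          (hw_cont t₀ ht₀).mono_left (nhdsWithin_mono t₀ Set.diff_subset)
        have hni : Filter.Tendsto (fun t => (inner ℝ (slope v t₀ t) (w t) : ℝ))
            (nhdsWithin t₀ (I \ {t₀})) (nhds ((inner ℝ (w t₀) (w t₀) : ℝ))) := hv'.inner hwL
        have hnn : Filter.Tendsto (fun t => ‖slope v t₀ t‖)
            (nhdsWithin t₀ (I \ {t₀})) (nhds ‖w t₀‖) := hv'.norm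
        have hg := (hni.const_mul ((-1:ℝ)^(cl t₀))).div hnn (norm_ne_zero_iff.mpr hw0)
        have hlim : (-1:ℝ)^(cl t₀) * (inner ℝ (w t₀) (w t₀) : ℝ) / ‖w t₀‖ = D t₀ := by
          rw [hσ, real_inner_self_eq_norm_sq]
          have hne : ‖w t₀‖ ≠ 0 := norm_ne_zero_iff.mpr hw0
          field_simp
        rw [← hlim]
        refine Filter.Tendsto.congr' ?_ hg
        have hball : ∀ᶠ t in nhdsWithin t₀ (I \ {t₀}), |t - t₀| < δ := by
          have hb : Metric.ball t₀ δ ∈ nhdsWithin t₀ (I \ {t₀}) :=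
            mem_nhdsWithin_of_mem_nhds (Metric.ball_mem_nhds _ hδ)
          filter_upwards [hb] with t ht
          simpa [Real.dist_eq] using ht
        filter_upwards [hball, self_mem_nhdsWithin] with t htb ht
        obtain ⟨htI, htne0⟩ := ht
        have htne : t ≠ t₀ := by simpa using htne0
        have hvt : v t ≠ 0 := by
          intro hvt
          have htF : t ∈ F := (hmemF t).mpr ⟨htI, hvt⟩
          exact absurd (hiso t htF htne) (not_le.mpr htb)
        have hnet : t - t₀ ≠ 0 := sub_ne_zero.mpr htne
        have hnv : ‖v t‖ ≠ 0 := norm_ne_zero_iff.mpr hvt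
        have hslv : slope v t₀ t = (t - t₀)⁻¹ • v t := by
          rw [slope]
          simp [h0, vsub_eq_sub]
        simp only [Pi.div_apply, hslv, hDdef]
        rw [if_neg hvt, real_inner_smul_left, norm_smul, Real.norm_eq_abs]
        rcases lt_or_gt_of_ne htne with h | h
        · have hc : c t = c t₀ :=
            Sb t₀ δ hδ hiso t (by rcases abs_lt.mp htb with ⟨h1, _⟩; linarith) h
          have hcl : cl t₀ = c t₀ + 1 := Sc t₀ ht₀F
          have habs : |(t - t₀)⁻¹| = -(t - t₀)⁻¹ :=
            abs_of_neg (inv_neg''.mpr (by linarith))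
          simp only [hsgdef]
          rw [hcl, hc, habs, pow_succ]
          field_simp
        · have hc : c t = cl t₀ :=
            Sa t₀ δ hδ hiso t h (by rcases abs_lt.mp htb with ⟨_, h2⟩; linarith)
          have habs : |(t - t₀)⁻¹| = (t - t₀)⁻¹ :=
            abs_of_pos (inv_pos_of_pos (by linarith))
          simp only [hsgdef]
          rw [hc, habs]
          field_simp
    · -- v t₀ ≠ 0
      have ht₀F : t₀ ∉ F := fun h => h0 ((hmemF t₀).mp h).2
      have hnv : ‖v t₀‖ ≠ 0 := norm_ne_zero_iff.mpr h0
      have hgc : ContinuousWithinAt (fun t => sg t₀ * (inner ℝ (v t) (w t) : ℝ) / ‖v t‖) I t₀ :=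
        (((hv_cont t₀ ht₀).inner (hw_cont t₀ ht₀)).const_mul (sg t₀)).div
          (hv_cont t₀ ht₀).norm hnv
      have hball : Metric.ball t₀ δ ∈ nhdsWithin t₀ I :=
        mem_nhdsWithin_of_mem_nhds (Metric.ball_mem_nhds _ hδ)
      have hev : D =ᶠ[nhdsWithin t₀ I] (fun t => sg t₀ * (inner ℝ (v t) (w t) : ℝ) / ‖v t‖) := by
        filter_upwards [hball, self_mem_nhdsWithin] with t htb htI
        have hd : |t - t₀| < δ := by simpa [Real.dist_eq] using htb
        have hvt : v t ≠ 0 := by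
          intro hvt
          have htF : t ∈ F := (hmemF t).mpr ⟨htI, hvt⟩
          have htne : t ≠ t₀ := fun e => ht₀F (e ▸ htF)
          exact absurd (hiso t htF htne) (not_le.mpr hd)
        have hsgeq : sg t = sg t₀ := by
          rcases lt_trichotomy t t₀ with h | h | h
          · have hc : c t = c t₀ :=
              Sb t₀ δ hδ hiso t (by rcases abs_lt.mp hd with ⟨h1, _⟩; linarith) h
            simp only [hsgdef]
            rw [hc]
          · rw [h]
          · have hc : c t = cl t₀ :=
              Sa t₀ δ hδ hiso t h (by rcases abs_lt.mp hd with ⟨_, h2⟩; linarith)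
            simp only [hsgdef]
            rw [hc, Sc' t₀ ht₀F]
        simp only [hDdef]
        rw [if_neg hvt, hsgeq]
      have hval : D t₀ = sg t₀ * (inner ℝ (v t₀) (w t₀) : ℝ) / ‖v t₀‖ := by
        simp only [hDdef]
        rw [if_neg h0]
      exact hgc.congr_of_eventuallyEq hev hval
  refine ⟨μ, ?_, fun t ht => ?_⟩
  · rw [show (1 : WithTop ℕ∞) = 0 + 1 from rfl, contDiffOn_succ_iff_derivWithin hUD]
    refine ⟨fun t ht => (hasD t ht).differentiableWithinAt, by simp, ?_⟩
    rw [contDiffOn_zero]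
    exact contD.congr (fun t ht => (hasD t ht).derivWithin (hUD t ht))
  · rw [hμdef]
    simp only [abs_mul, hsgdef, abs_pow, abs_neg, abs_one, one_pow, one_mul, abs_norm]
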